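/- Let Δ, B, C be n×n positive semi-definite Hermitian complex matrices, with B positive definite. Then det(Δ + B + C) · det(B) ≤ det(B + C) · det(Δ + B); equivalently, det(Δ+B+C)/det(Δ+B) ≤ det(B+C)/det(B). -/

import Mathlib

open ComplexOrder Matrix
open scoped MatrixOrder

variable {n : ℕ}

lemma aux_one_le_det_one_add {D : Matrix (Fin n) (Fin n) ℂ} (hD : D.PosSemidef) :
    (1 : ℂ) ≤ (1 + D).det := by
  set U : Matrix (Fin n) (Fin n) ℂ := (hD.1.eigenvectorUnitary : Matrix (Fin n) (Fin n) ℂ)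
  have hU : U * star U = 1 := (Matrix.mem_unitaryGroup_iff).mp hD.1.eigenvectorUnitary.2
  have h1 : (1 : Matrix (Fin n) (Fin n) ℂ) + D
      = U * (1 + diagonal (RCLike.ofReal ∘ hD.1.eigenvalues)) * star U := by
    rw [mul_add, add_mul, mul_one, hU]
    exact congrArg (1 + ·) hD.1.spectral_theorem
  have h2 : (1 + D).det = ((1 : Matrix (Fin n) (Fin n) ℂ) + diagonal (RCLike.ofReal ∘ hD.1.eigenvalues)).det := by
    rw [h1, det_mul_right_comm, hU, one_mul]
  have h3 : (1 : Matrix (Fin n) (Fin n) ℂ) + diagonal (RCLike.ofReal ∘ hD.1.eigenvalues)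
      = diagonal (fun i => (((1 : ℝ) + hD.1.eigenvalues i : ℝ) : ℂ)) := by
    rw [← diagonal_one, diagonal_add]
    congr 1
    ext i
    push_cast
    rfl
  rw [h2, h3, det_diagonal]
  have h4 : (∏ i, (((1 : ℝ) + hD.1.eigenvalues i : ℝ) : ℂ))
      = ((∏ i, ((1 : ℝ) + hD.1.eigenvalues i) : ℝ) : ℂ) := by push_cast; rfl
  rw [h4]
  have h5 : (1 : ℝ) ≤ ∏ i, ((1 : ℝ) + hD.1.eigenvalues i) := by
    calc (1 : ℝ) = ∏ _i : Fin n, (1 : ℝ) := by simp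
      _ ≤ ∏ i, ((1 : ℝ) + hD.1.eigenvalues i) :=
        Finset.prod_le_prod (fun i _ => by norm_num)
          (fun i _ => by linarith [hD.eigenvalues_nonneg i])
  exact_mod_cast h5

lemma aux_det_le_det {P Q : Matrix (Fin n) (Fin n) ℂ} (hP : P.PosDef)
    (hQP : (Q - P).PosSemidef) : P.det ≤ Q.det := by
  set S : Matrix (Fin n) (Fin n) ℂ := CFC.sqrt P with hSdef
  have hSS : S * S = P := CFC.sqrt_mul_sqrt_self P hP.posSemidef.nonneg
  have hdetS : IsUnit S.det := by
    have h : S.det * S.det = P.det := by rw [← det_mul, hSS]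
    exact isUnit_iff_ne_zero.mpr fun h0 => hP.det_pos.ne' (by rw [← h, h0, mul_zero])
  have hSinvh : (S⁻¹).IsHermitian := (CFC.sqrt_nonneg P).posSemidef.1.inv
  set D : Matrix (Fin n) (Fin n) ℂ := S⁻¹ * (Q - P) * S⁻¹ with hDdef
  have hDps : D.PosSemidef := by
    have h := hQP.conjTranspose_mul_mul_same S⁻¹
    rwa [hSinvh.eq] at h
  have hrec : ∀ X : Matrix (Fin n) (Fin n) ℂ, S * (S⁻¹ * X * S⁻¹) * S = X := by
    intro X
    calc S * (S⁻¹ * X * S⁻¹) * S = S * (S⁻¹ * (X * (S⁻¹ * S))) := by simp only [mul_assoc]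
      _ = X := by
        rw [Matrix.nonsing_inv_mul _ hdetS, mul_one,
          Matrix.mul_nonsing_inv_cancel_left _ _ hdetS]
  have hQ : Q = S * (1 + D) * S := by
    rw [hDdef, mul_add, mul_one, add_mul, hrec, hSS]
    abel
  have hdetQ : Q.det = P.det * (1 + D).det := by
    rw [hQ, det_mul, det_mul, mul_right_comm, ← det_mul, hSS]
  rw [hdetQ]
  exact le_mul_of_one_le_right hP.det_pos.le (aux_one_le_det_one_add hDps)

lemma aux_sub_inv_psd {A : Matrix (Fin n) (Fin n) ℂ} (hA : A.PosSemidef) :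
    ((1 : Matrix (Fin n) (Fin n) ℂ) - (1 + A)⁻¹).PosSemidef := by
  set P : Matrix (Fin n) (Fin n) ℂ := 1 + A with hPdef
  have hP : P.PosDef := Matrix.PosDef.one.add_posSemidef hA
  have hdet : IsUnit P.det := hP.det_pos.ne'.isUnit
  have hAA : (A + A * A).PosSemidef := by
    have h2 : (A * A).PosSemidef := by
      have h := (Matrix.PosSemidef.one (n := Fin n) (R := ℂ)).conjTranspose_mul_mul_same A
      rwa [mul_one, hA.1.eq] at h
    exact hA.add h2
  have hkey : (1 : Matrix (Fin n) (Fin n) ℂ) - P⁻¹ = P⁻¹ * (A + A * A) * P⁻¹ := by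
    have h1 : A + A * A = A * P := by rw [hPdef, mul_add, mul_one]
    have h2 : A = P - 1 := by rw [hPdef]; abel
    rw [h1, ← mul_assoc, mul_assoc (P⁻¹ * A), Matrix.mul_nonsing_inv _ hdet, mul_one,
      h2, mul_sub, Matrix.nonsing_inv_mul _ hdet, mul_one]
  rw [hkey]
  have h := hAA.conjTranspose_mul_mul_same P⁻¹
  rwa [hP.isHermitian.inv.eq] at h

lemma aux_key_ineq {A C : Matrix (Fin n) (Fin n) ℂ} (hA : A.PosSemidef) (hC : C.PosSemidef) :
    ((1 : Matrix (Fin n) (Fin n) ℂ) + A + C).det ≤ (1 + A).det * (1 + C).det := by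
  set P : Matrix (Fin n) (Fin n) ℂ := 1 + A with hPdef
  have hP : P.PosDef := Matrix.PosDef.one.add_posSemidef hA
  have hdet : IsUnit P.det := hP.det_pos.ne'.isUnit
  set R : Matrix (Fin n) (Fin n) ℂ := CFC.sqrt C with hRdef
  have hRR : R * R = C := CFC.sqrt_mul_sqrt_self C hC.nonneg
  have hRh : R.IsHermitian := (CFC.sqrt_nonneg C).posSemidef.1
  set M : Matrix (Fin n) (Fin n) ℂ := R * P⁻¹ * R with hMdef
  have hMps : M.PosSemidef := by
    have h := hP.inv.posSemidef.conjTranspose_mul_mul_same R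
    rwa [hRh.eq] at h
  have h1 : (1 : Matrix (Fin n) (Fin n) ℂ) + A + C = P * (1 + P⁻¹ * R * R) := by
    rw [mul_add, mul_one, ← mul_assoc, Matrix.mul_nonsing_inv_cancel_left _ _ hdet, hRR, hPdef]
  have h2 : ((1 : Matrix (Fin n) (Fin n) ℂ) + A + C).det = P.det * (1 + M).det := by
    rw [h1, det_mul, Matrix.det_one_add_mul_comm (P⁻¹ * R) R, ← mul_assoc, ← hMdef]
  have h3 : (1 + M).det ≤ (1 + C).det := by
    have hPM : ((1 : Matrix (Fin n) (Fin n) ℂ) + M).PosDef :=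
      Matrix.PosDef.one.add_posSemidef hMps
    refine aux_det_le_det hPM ?_
    have hsub : (1 : Matrix (Fin n) (Fin n) ℂ) + C - (1 + M) = R * (1 - P⁻¹) * R := by
      rw [mul_sub, sub_mul, mul_one, hRR, hMdef]
      abel
    rw [hsub]
    have h := (aux_sub_inv_psd hA).conjTranspose_mul_mul_same R
    rwa [hRh.eq, ← hPdef] at h
  rw [h2]
  exact mul_le_mul_of_nonneg_left h3 hP.det_pos.le


/-- for `n × n` positive semidefinite Hermitian complex matrices `Δ, B, C`
with `B` positive definite,
`det(Δ + B + C) · det(B) ≤ det(B + C) · det(Δ + B)`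
(all the determinants are nonnegative reals, so the inequality is stated for their
real parts). -/
theorem stmt1 (n : ℕ) (Δ B C : Matrix (Fin n) (Fin n) ℂ)
    (hΔ : Δ.PosSemidef) (hB : B.PosDef) (hC : C.PosSemidef) :
    (Δ + B + C).det.re * B.det.re ≤ (B + C).det.re * (Δ + B).det.re := by
  set S : Matrix (Fin n) (Fin n) ℂ := CFC.sqrt B with hSdef
  have hSS : S * S = B := CFC.sqrt_mul_sqrt_self B hB.posSemidef.nonneg
  have hdetS : IsUnit S.det := by
    have h : S.det * S.det = B.det := by rw [← det_mul, hSS]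
    exact isUnit_iff_ne_zero.mpr fun h0 => hB.det_pos.ne' (by rw [← h, h0, mul_zero])
  have hSinvh : (S⁻¹).IsHermitian := (CFC.sqrt_nonneg B).posSemidef.1.inv
  have hconj : ∀ {X : Matrix (Fin n) (Fin n) ℂ}, X.PosSemidef → (S⁻¹ * X * S⁻¹).PosSemidef := by
    intro X hX
    have h := hX.conjTranspose_mul_mul_same S⁻¹
    rwa [hSinvh.eq] at h
  set A' : Matrix (Fin n) (Fin n) ℂ := S⁻¹ * Δ * S⁻¹ with hA'def
  set C' : Matrix (Fin n) (Fin n) ℂ := S⁻¹ * C * S⁻¹ with hC'def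
  have hrec : ∀ X : Matrix (Fin n) (Fin n) ℂ, S * (S⁻¹ * X * S⁻¹) * S = X := by
    intro X
    calc S * (S⁻¹ * X * S⁻¹) * S = S * (S⁻¹ * (X * (S⁻¹ * S))) := by simp only [mul_assoc]
      _ = X := by
        rw [Matrix.nonsing_inv_mul _ hdetS, mul_one,
          Matrix.mul_nonsing_inv_cancel_left _ _ hdetS]
  have hd1 : (Δ + B + C).det = B.det * (1 + A' + C').det := by
    have h : Δ + B + C = S * (1 + A' + C') * S := by
      rw [mul_add, mul_add, mul_one, add_mul, add_mul, hrec, hrec, hSS]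
      abel
    rw [h, det_mul, det_mul, mul_right_comm, ← det_mul, hSS]
  have hd2 : (B + C).det = B.det * (1 + C').det := by
    have h : B + C = S * (1 + C') * S := by
      rw [mul_add, mul_one, add_mul, hrec, hSS]
    rw [h, det_mul, det_mul, mul_right_comm, ← det_mul, hSS]
  have hd3 : (Δ + B).det = B.det * (1 + A').det := by
    have h : Δ + B = S * (1 + A') * S := by
      rw [mul_add, mul_one, add_mul, hrec, hSS]
      abel
    rw [h, det_mul, det_mul, mul_right_comm, ← det_mul, hSS]
  have hmain : (Δ + B + C).det * B.det ≤ (B + C).det * (Δ + B).det := by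
    rw [hd1, hd2, hd3]
    have hkey := aux_key_ineq (hconj hΔ) (hconj hC)
    calc B.det * (1 + A' + C').det * B.det
        = B.det * B.det * (1 + A' + C').det := by ring
      _ ≤ B.det * B.det * ((1 + A').det * (1 + C').det) :=
        mul_le_mul_of_nonneg_left hkey (mul_nonneg hB.det_pos.le hB.det_pos.le)
      _ = B.det * (1 + C').det * (B.det * (1 + A').det) := by ring
  -- now pass to real parts
  have him : ∀ {X : Matrix (Fin n) (Fin n) ℂ}, X.PosDef → X.det.im = 0 := by
    intro X hX
    have h := hX.det_pos
    rw [Complex.lt_def] at h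
    exact h.2.symm
  have h1 : (Δ + B + C).det.im = 0 := him ((Matrix.PosDef.posSemidef_add hΔ hB).add_posSemidef hC)
  have h2 : B.det.im = 0 := him hB
  have h3 : (B + C).det.im = 0 := him (hB.add_posSemidef hC)
  have h4 : (Δ + B).det.im = 0 := him (Matrix.PosDef.posSemidef_add hΔ hB)
  rw [Complex.le_def] at hmain
  have h5 := hmain.1
  rw [Complex.mul_re, Complex.mul_re, h1, h2, h3, h4] at h5
  simpa using h5
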